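/- For any minimizer X of the problem: minimize ‖X−A‖_F over nonnegative matrices X with ρ(X)=0, where A is Boolean, the matrix X is itself Boolean and satisfies X ≤ A entrywise. -/

import Mathlib

/-- Spectral radius of a real square matrix. -/
noncomputable def specRad {m : Type*} [Fintype m] [DecidableEq m]
    (A : Matrix m m ℝ) : ℝ :=
  sSup ((fun μ : ℂ => ‖μ‖) '' spectrum ℂ (A.map (algebraMap ℝ ℂ)))

/-- Frobenius norm of a real matrix. -/
noncomputable def frob {n : ℕ} (M : Matrix (Fin n) (Fin n) ℝ) : ℝ :=
  Real.sqrt (∑ i, ∑ j, (M i j) ^ 2)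

open Polynomial in
/-- If a real matrix has some zero power, its spectral radius is zero. -/
lemma specRad_eq_zero_of_pow_eq_zero {n : ℕ} (M : Matrix (Fin n) (Fin n) ℝ) (k : ℕ)
    (hk : M ^ k = 0) : specRad M = 0 := by
  set f := algebraMap ℝ ℂ with hf
  have hMc : (M.map f) ^ k = 0 := by
    rw [← RingHom.mapMatrix_apply, ← map_pow, hk, map_zero]
  have hσ : spectrum ℂ (M.map f) ⊆ {0} := by
    intro μ hμ
    simp only [Set.mem_singleton_iff]
    by_contra hμ0
    have hmem : μ ^ k ∈ spectrum ℂ ((aeval (M.map f)) (X ^ k : ℂ[X])) :=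
      spectrum.subset_polynomial_aeval (M.map f) (X ^ k) ⟨μ, hμ, by simp⟩
    rw [map_pow, aeval_X, hMc] at hmem
    rw [spectrum.mem_iff, sub_zero] at hmem
    exact hmem (((isUnit_iff_ne_zero).mpr (pow_ne_zero k hμ0)).map (algebraMap ℂ _))
  rw [specRad]
  rcases Set.subset_singleton_iff_eq.mp hσ with h | h <;> rw [h]
  · simp [Real.sSup_empty]
  · simp

open Polynomial in
/-- If a real matrix has zero spectral radius, then its `n`-th power is zero. -/
lemma pow_eq_zero_of_specRad_eq_zero {n : ℕ} (M : Matrix (Fin n) (Fin n) ℝ)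
    (h : specRad M = 0) : M ^ n = 0 := by
  set f := algebraMap ℝ ℂ with hf
  set Mc := M.map f with hMcdef
  have hfin : (spectrum ℂ Mc).Finite := Matrix.finite_spectrum Mc
  have hσ : ∀ μ ∈ spectrum ℂ Mc, μ = 0 := by
    intro μ hμ
    have hb : BddAbove ((fun μ : ℂ => ‖μ‖) '' spectrum ℂ Mc) := (hfin.image _).bddAbove
    have h1 : ‖μ‖ ≤ specRad M := le_csSup hb ⟨μ, hμ, rfl⟩
    rw [h] at h1
    simpa using le_antisymm h1 (norm_nonneg μ)
  have hroots : ∀ μ ∈ Mc.charpoly.roots, μ = 0 := by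
    intro μ hμ
    have hroot : Mc.charpoly.IsRoot μ := isRoot_of_mem_roots hμ
    apply hσ
    rw [spectrum.mem_iff]
    have hmat : (evalRingHom μ).mapMatrix (Matrix.charmatrix Mc)
        = algebraMap ℂ (Matrix (Fin n) (Fin n) ℂ) μ - Mc := by
      ext i j
      by_cases hij : i = j <;>
        simp [Matrix.charmatrix_apply, Matrix.algebraMap_matrix_apply, hij,
          Matrix.diagonal_apply, Matrix.sub_apply]
    have hdet : (algebraMap ℂ (Matrix (Fin n) (Fin n) ℂ) μ - Mc).det = 0 := by
      rw [← hmat, ← RingHom.map_det]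
      simpa [Matrix.charpoly] using hroot
    intro hunit
    have := (Matrix.isUnit_iff_isUnit_det _).mp hunit
    rw [hdet] at this
    simpa using this
  have hsp : Mc.charpoly.Splits := IsAlgClosed.splits _
  have hcard : Mc.charpoly.roots.card = n := by
    rw [(Polynomial.splits_iff_card_roots).mp hsp, Matrix.charpoly_natDegree_eq_dim,
      Fintype.card_fin]
  have hcp : Mc.charpoly = X ^ n := by
    have h1 := hsp.eq_prod_roots_of_monic Mc.charpoly_monic
    rw [h1]
    have h2 : Mc.charpoly.roots.map (fun a => X - C a)
        = Mc.charpoly.roots.map (fun _ => (X : ℂ[X])) :=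
      Multiset.map_congr rfl (fun μ hμ => by rw [hroots μ hμ, map_zero, sub_zero])
    rw [h2, Multiset.map_const', Multiset.prod_replicate, hcard]
  have hMc : Mc ^ n = 0 := by
    have h3 := Mc.aeval_self_charpoly
    rwa [hcp, map_pow, aeval_X] at h3
  have hmap : (M ^ n).map f = 0 := by
    rw [← RingHom.mapMatrix_apply, map_pow, RingHom.mapMatrix_apply, ← hMcdef, hMc]
  ext i j
  have h4 : f ((M ^ n) i j) = 0 := congrFun (congrFun hmap i) j
  have hinj : Function.Injective f := RingHom.injective f
  rw [Matrix.zero_apply]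
  exact hinj (by simpa using h4)

/-- Entries of powers of entrywise nonnegative matrices are nonnegative. -/
lemma pow_entry_nonneg {n : ℕ} (X : Matrix (Fin n) (Fin n) ℝ) (hX : ∀ i j, 0 ≤ X i j) :
    ∀ k i j, 0 ≤ (X ^ k) i j := by
  intro k
  induction k with
  | zero =>
    intro i j
    rw [pow_zero]
    by_cases h : i = j <;> simp [Matrix.one_apply, h]
  | succ k ih =>
    intro i j
    rw [pow_succ, Matrix.mul_apply]
    exact Finset.sum_nonneg fun l _ => mul_nonneg (ih i l) (hX l j)

/-- If the support of `Y` is contained in the support of `X` (both nonneg),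
then zero entries of powers of `X` are zero entries of powers of `Y`. -/
lemma pow_support_le {n : ℕ} (X Y : Matrix (Fin n) (Fin n) ℝ)
    (hX : ∀ i j, 0 ≤ X i j) (hY : ∀ i j, 0 ≤ Y i j)
    (h : ∀ i j, X i j = 0 → Y i j = 0) :
    ∀ k i j, (X ^ k) i j = 0 → (Y ^ k) i j = 0 := by
  intro k
  induction k with
  | zero => intro i j h0; simpa using h0
  | succ k ih =>
    intro i j h0
    rw [pow_succ, Matrix.mul_apply] at h0 ⊢
    have hterm := (Finset.sum_eq_zero_iff_of_nonneg
      (fun l _ => mul_nonneg (pow_entry_nonneg X hX k i l) (hX l j))).mp h0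
    refine Finset.sum_eq_zero fun l hl => ?_
    rcases mul_eq_zero.mp (hterm l hl) with h1 | h1
    · rw [ih i l h1, zero_mul]
    · rw [h l j h1, mul_zero]

/-- Any minimizer `X` of `‖X - A‖_F` over the set of entrywise nonnegative
matrices with spectral radius `0`, where `A` is Boolean, is itself a Boolean
matrix and satisfies `X ≤ A` entrywise. -/
theorem stmt7 {n : ℕ} (A X : Matrix (Fin n) (Fin n) ℝ)
    (hA : ∀ i j, A i j = 0 ∨ A i j = 1)
    (hX0 : ∀ i j, 0 ≤ X i j) (hXρ : specRad X = 0)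
    (hmin : ∀ Y : Matrix (Fin n) (Fin n) ℝ,
      (∀ i j, 0 ≤ Y i j) → specRad Y = 0 → frob (X - A) ≤ frob (Y - A)) :
    (∀ i j, X i j = 0 ∨ X i j = 1) ∧ (∀ i j, X i j ≤ A i j) := by
  classical
  have hA0 : ∀ i j, 0 ≤ A i j := fun i j => by rcases hA i j with h | h <;> rw [h] <;> norm_num
  -- the rounded matrix
  set Y : Matrix (Fin n) (Fin n) ℝ := fun i j => if X i j = 0 then 0 else A i j with hYdef
  have hY0 : ∀ i j, 0 ≤ Y i j := by
    intro i j
    simp only [hYdef]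
    split <;> [exact le_refl 0; exact hA0 i j]
  have hsupp : ∀ i j, X i j = 0 → Y i j = 0 := by
    intro i j h; simp [hYdef, h]
  have hXn : X ^ n = 0 := pow_eq_zero_of_specRad_eq_zero X hXρ
  have hYn : Y ^ n = 0 := by
    ext i j
    rw [Matrix.zero_apply]
    exact pow_support_le X Y hX0 hY0 hsupp n i j (by rw [hXn, Matrix.zero_apply])
  have hYρ : specRad Y = 0 := specRad_eq_zero_of_pow_eq_zero Y n hYn
  -- entrywise comparison of squared deviations
  have hterm : ∀ i j, (Y - A) i j ^ 2 ≤ (X - A) i j ^ 2 := by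
    intro i j
    by_cases h : X i j = 0
    · rw [Matrix.sub_apply, Matrix.sub_apply, hsupp i j h, h]
    · have : Y i j = A i j := by simp [hYdef, h]
      rw [Matrix.sub_apply, this, sub_self]
      simpa using sq_nonneg ((X - A) i j)
  have hsumle : ∑ i, ∑ j, (Y - A) i j ^ 2 ≤ ∑ i, ∑ j, (X - A) i j ^ 2 :=
    Finset.sum_le_sum fun i _ => Finset.sum_le_sum fun j _ => hterm i j
  -- from minimality, the sums are equal
  have hfrob := hmin Y hY0 hYρ
  have hsumge : ∑ i, ∑ j, (X - A) i j ^ 2 ≤ ∑ i, ∑ j, (Y - A) i j ^ 2 := by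
    by_contra hlt
    push_neg at hlt
    have h1 : frob (Y - A) < frob (X - A) := by
      rw [frob, frob]
      exact Real.sqrt_lt_sqrt (Finset.sum_nonneg fun i _ =>
        Finset.sum_nonneg fun j _ => sq_nonneg _) hlt
    exact absurd hfrob (not_le.mpr h1)
  have hsumeq : ∑ i, ∑ j, (Y - A) i j ^ 2 = ∑ i, ∑ j, (X - A) i j ^ 2 :=
    le_antisymm hsumle hsumge
  -- hence each term is equal
  have hinner : ∀ i, ∑ j, (Y - A) i j ^ 2 = ∑ j, (X - A) i j ^ 2 := by
    intro i
    have := (Finset.sum_eq_sum_iff_of_le (f := fun i => ∑ j, (Y - A) i j ^ 2)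
      (g := fun i => ∑ j, (X - A) i j ^ 2)
      (fun i _ => Finset.sum_le_sum fun j _ => hterm i j)).mp hsumeq
    exact this i (Finset.mem_univ i)
  have heach : ∀ i j, (Y - A) i j ^ 2 = (X - A) i j ^ 2 := by
    intro i j
    have := (Finset.sum_eq_sum_iff_of_le (f := fun j => (Y - A) i j ^ 2)
      (g := fun j => (X - A) i j ^ 2) (fun j _ => hterm i j)).mp (hinner i)
    exact this j (Finset.mem_univ j)
  -- conclude
  have key : ∀ i j, X i j = 0 ∨ (X i j = A i j ∧ A i j = 1) := by
    intro i j
    by_cases h : X i j = 0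
    · exact Or.inl h
    · right
      have hYA : Y i j = A i j := by simp [hYdef, h]
      have h0 : (X i j - A i j) ^ 2 = 0 := by
        have h5 := heach i j
        rw [Matrix.sub_apply, Matrix.sub_apply, hYA, sub_self] at h5
        simpa using h5.symm
      have hXA : X i j = A i j := by
        have := pow_eq_zero_iff (n := 2) (two_ne_zero) |>.mp h0
        linarith
      rcases hA i j with h1 | h1
      · exact absurd (hXA.trans h1) h
      · exact ⟨hXA, h1⟩
  constructor
  · intro i j
    rcases key i j with h | ⟨h1, h2⟩
    · exact Or.inl h
    · exact Or.inr (h1.trans h2)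
  · intro i j
    rcases key i j with h | ⟨h1, _⟩
    · rw [h]; exact hA0 i j
    · rw [h1]
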